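/- arXiv:2108.12034 — 3 statements merged into one kernel-verified Lean document; each statement's English description precedes it below -/
import Mathlib

section
/- Let a, b, c be a non-equilateral isosceles triangle in ℝ² with apex a, vertex angle α and base angle β, and let p be a point on the opposite side of line bc from a, in the region where both ∠cap < α and ∠bap < α, such that {a,b,c,p} determine at most two distinct angle values. Then α = π/2, β = π/4, and acpb is a square. -/
open EuclideanGeometry

noncomputable section

abbrev Pt : Type := EuclideanSpace ℝ (Fin 2)

/-- The point (x, y) in the Euclidean plane. -/
def pt (x y : ℝ) : Pt := (WithLp.equiv 2 (Fin 2 → ℝ)).symm ![x, y]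

/-- The set of distinct angle values in (0, π) determined by a planar point set. -/
def angleSet (P : Set Pt) : Set ℝ :=
  {θ : ℝ | θ ∈ Set.Ioo 0 Real.pi ∧
    ∃ x ∈ P, ∃ y ∈ P, ∃ z ∈ P, x ≠ y ∧ y ≠ z ∧ x ≠ z ∧ ∠ x y z = θ}

namespace Stmt16Aux

set_option maxHeartbeats 1000000

open Real

instance : Fact (Module.finrank ℝ Pt = 2) := ⟨finrank_euclideanSpace_fin⟩

instance : Module.Oriented ℝ Pt (Fin 2) :=
  ⟨Module.Basis.orientation ((EuclideanSpace.basisFun (Fin 2) ℝ).toBasis)⟩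

lemma kcases {k : ℤ} {x : ℝ} (h : x = 2 * π * k) (h1 : -(3*π) < x) (h2 : x < 3*π) :
    x = -(2*π) ∨ x = 0 ∨ x = 2*π := by
  have hπ := Real.pi_pos
  have hk : k = -1 ∨ k = 0 ∨ k = 1 := by
    by_contra hc
    push_neg at hc
    obtain ⟨ha, hb, hcc⟩ := hc
    have h' : k ≤ -2 ∨ 2 ≤ k := by omega
    rcases h' with h' | h'
    · have : (k : ℝ) ≤ -2 := by exact_mod_cast h'
      nlinarith
    · have : (2 : ℝ) ≤ (k : ℝ) := by exact_mod_cast h'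
      nlinarith
  rcases hk with rfl | rfl | rfl
  · left; rw [h]; push_cast; ring
  · right; left; rw [h]; push_cast; ring
  · right; right; rw [h]; push_cast; ring

lemma coe_eq {x y : ℝ} (h : (x : Real.Angle) = (y : Real.Angle))
    (h1 : -(3*π) < x - y) (h2 : x - y < 3*π) :
    x = y - 2*π ∨ x = y ∨ x = y + 2*π := by
  obtain ⟨k, hk⟩ := Real.Angle.angle_eq_iff_two_pi_dvd_sub.mp h
  rcases kcases hk h1 h2 with h' | h' | h'
  · left; linarith
  · right; left; linarith
  · right; right; linarith

lemma ne_zero_pi {t : ℝ} (h1 : -π < t) (h2 : t < π) (h0 : t ≠ 0) :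
    (t : Real.Angle) ≠ 0 ∧ (t : Real.Angle) ≠ (π : ℝ) := by
  have ht : (t : Real.Angle).toReal = t := Real.Angle.toReal_coe_eq_self_iff.mpr ⟨h1, le_of_lt h2⟩
  constructor
  · intro h; rw [h] at ht; simp at ht; exact h0 ht.symm
  · intro h; rw [h] at ht; rw [Real.Angle.toReal_pi] at ht; linarith

lemma noncol {X Y Z : Pt} {t : ℝ} (h : ∡ X Y Z = (t : ℝ)) (h1 : -π < t) (h2 : t < π)
    (h0 : t ≠ 0) : ¬ Collinear ℝ ({X, Y, Z} : Set Pt) := by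
  intro hc
  rcases EuclideanGeometry.oangle_eq_zero_or_eq_pi_iff_collinear.mpr hc with h' | h' <;>
    rw [h] at h'
  · exact (ne_zero_pi h1 h2 h0).1 h'
  · exact (ne_zero_pi h1 h2 h0).2 h'

lemma angle_pos_lt {X Y Z : Pt} (h : ¬ Collinear ℝ ({X, Y, Z} : Set Pt)) :
    0 < ∠ X Y Z ∧ ∠ X Y Z < π := by
  constructor
  · rcases (EuclideanGeometry.angle_nonneg X Y Z).lt_or_eq with h' | h'
    · exact h'
    · exact absurd (EuclideanGeometry.collinear_of_angle_eq_zero h'.symm) h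
  · rcases (EuclideanGeometry.angle_le_pi X Y Z).lt_or_eq with h' | h'
    · exact h'
    · exact absurd (EuclideanGeometry.collinear_of_angle_eq_pi h') h

lemma angle_val {X Y Z : Pt} (hx : X ≠ Y) (hz : Z ≠ Y) {t : ℝ} (h : ∡ X Y Z = (t : ℝ))
    (h1 : -π < t) (h2 : t ≤ π) : ∠ X Y Z = |t| := by
  rw [EuclideanGeometry.angle_eq_abs_oangle_toReal hx hz, h,
    Real.Angle.toReal_coe_eq_self_iff.mpr ⟨h1, h2⟩]

lemma aux (a b c p : Pt) (α β : ℝ)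
    (hcol : ¬ Collinear ℝ ({a, b, c} : Set Pt))
    (hiso : dist a b = dist a c)
    (hα : ∠ b a c = α) (hβ : ∠ a b c = β) (hne : α ≠ β)
    (hside : (affineSpan ℝ ({b, c} : Set Pt)).SOppSide a p)
    (h1 : ∠ c a p < α) (h2 : ∠ b a p < α)
    (hcount : (angleSet {a, b, c, p}).ncard ≤ 2)
    (hsign : (∡ b a c).sign = 1) :
    α = π / 2 ∧ β = π / 4 ∧
    dist b a = dist b p ∧ dist c a = dist c p ∧ dist a p = dist c b := by
  have hπ := Real.pi_pos
  -- distinctness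
  have hab : a ≠ b := ne₁₂_of_not_collinear hcol
  have hac : a ≠ c := ne₁₃_of_not_collinear hcol
  have hbc : b ≠ c := ne₂₃_of_not_collinear hcol
  have hpa : p ≠ a := by
    rintro rfl
    exact AffineSubspace.not_sOppSide_self _ p hside
  have hpb : p ≠ b := fun h =>
    hside.right_notMem (h ▸ left_mem_affineSpan_pair ℝ b c)
  have hpc : p ≠ c := fun h =>
    hside.right_notMem (h ▸ right_mem_affineSpan_pair ℝ b c)
  -- α, β in (0, π)
  have hα0 : 0 < α := by
    rcases (hα ▸ EuclideanGeometry.angle_nonneg b a c).lt_or_eq with h' | h'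
    · exact h'
    · exact absurd (EuclideanGeometry.collinear_of_angle_eq_zero (hα.trans h'.symm))
        (by intro hcc; exact hcol (by rwa [Set.insert_comm] at hcc))
  have hαπ : α < π := by
    rcases (hα ▸ EuclideanGeometry.angle_le_pi b a c).lt_or_eq with h' | h'
    · exact h'
    · exact absurd (EuclideanGeometry.collinear_of_angle_eq_pi (hα.trans h'))
        (by intro hcc; exact hcol (by rwa [Set.insert_comm] at hcc))
  have hβ0 : 0 < β := by
    rcases (hβ ▸ EuclideanGeometry.angle_nonneg a b c).lt_or_eq with h' | h'
    · exact h'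
    · exact absurd (EuclideanGeometry.collinear_of_angle_eq_zero (hβ.trans h'.symm)) hcol
  have hβπ : β < π := by
    rcases (hβ ▸ EuclideanGeometry.angle_le_pi a b c).lt_or_eq with h' | h'
    · exact h'
    · exact absurd (EuclideanGeometry.collinear_of_angle_eq_pi (hβ.trans h')) hcol
  -- angle sum: α + 2β = π
  have hsum : α + 2 * β = π := by
    have tsum := EuclideanGeometry.angle_add_angle_add_angle_eq_pi (p₁ := a) (p₂ := b) c
      hab.symm
    have e1 : ∠ b c a = β := by
      rw [EuclideanGeometry.angle_comm, ← EuclideanGeometry.angle_eq_angle_of_dist_eq hiso, hβ]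
    have e2 : ∠ c a b = α := by rw [EuclideanGeometry.angle_comm, hα]
    rw [hβ, e1, e2] at tsum
    linarith
  -- the angle set is finite and equal to {α, β}
  have hfin : (angleSet {a, b, c, p}).Finite := by
    have hsub : angleSet {a, b, c, p} ⊆
        (fun t : Pt × Pt × Pt => ∠ t.1 t.2.1 t.2.2) ''
          (({a, b, c, p} : Set Pt) ×ˢ ({a, b, c, p} : Set Pt) ×ˢ ({a, b, c, p} : Set Pt)) := by
      rintro θ ⟨_, x, hx, y, hy, z, hz, _, _, _, rfl⟩
      exact ⟨(x, y, z), ⟨hx, hy, hz⟩, rfl⟩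
    exact Set.Finite.subset (Set.Finite.image _ ((Set.toFinite _).prod
      ((Set.toFinite _).prod (Set.toFinite _)))) hsub
  have hαmem : α ∈ angleSet {a, b, c, p} :=
    ⟨⟨hα0, hαπ⟩, b, by simp, a, by simp, c, by simp, hab.symm, hac, hbc, hα⟩
  have hβmem : β ∈ angleSet {a, b, c, p} :=
    ⟨⟨hβ0, hβπ⟩, a, by simp, b, by simp, c, by simp, hab, hbc, hac, hβ⟩
  have hmem : ∀ θ ∈ angleSet {a, b, c, p}, θ = α ∨ θ = β := by
    intro θ hθ
    by_contra hcon
    push_neg at hcon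
    have hsub : ({α, β, θ} : Set ℝ) ⊆ angleSet {a, b, c, p} := by
      intro x hx
      simp only [Set.mem_insert_iff, Set.mem_singleton_iff] at hx
      rcases hx with rfl | rfl | rfl
      · exact hαmem
      · exact hβmem
      · exact hθ
    have h3 : ({α, β, θ} : Set ℝ).ncard = 3 := by
      rw [Set.ncard_insert_of_notMem (by simp [hne, Ne.symm hcon.1]),
        Set.ncard_pair (Ne.symm hcon.2)]
    have := Set.ncard_le_ncard hsub hfin
    omega
  have hval : ∀ X Y Z : Pt, X ∈ ({a, b, c, p} : Set Pt) → Y ∈ ({a, b, c, p} : Set Pt) →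
      Z ∈ ({a, b, c, p} : Set Pt) → X ≠ Y → Y ≠ Z → X ≠ Z →
      ∠ X Y Z ≠ 0 → ∠ X Y Z ≠ π → (∠ X Y Z = α ∨ ∠ X Y Z = β) := by
    intro X Y Z hX hY hZ h₁ h₂ h₃ h₄ h₅
    exact hmem _ ⟨⟨(EuclideanGeometry.angle_nonneg X Y Z).lt_of_ne (Ne.symm h₄),
      (EuclideanGeometry.angle_le_pi X Y Z).lt_of_ne h₅⟩, X, hX, Y, hY, Z, hZ, h₁, h₂, h₃, rfl⟩
  -- oangle additivity at a
  have key0 : ∡ b a p + ∡ p a c = ∡ b a c :=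
    EuclideanGeometry.oangle_add hab.symm hpa hac.symm
  -- ∠ c a p ≠ 0 and ∠ b a p ≠ 0
  have hcap0 : ∠ c a p ≠ 0 := by
    intro h
    have hz : ∡ p a c = 0 :=
      (EuclideanGeometry.oangle_eq_zero_iff_angle_eq_zero hpa hac.symm).mpr
        (by rw [EuclideanGeometry.angle_comm]; exact h)
    have he : ∡ b a p = ∡ b a c := by rw [← key0, hz, add_zero]
    have he2 : ∠ b a p = ∠ b a c := by
      rw [EuclideanGeometry.angle_eq_abs_oangle_toReal hab.symm hpa,
        EuclideanGeometry.angle_eq_abs_oangle_toReal hab.symm hac.symm, he]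
    rw [hα] at he2
    linarith [h2, he2.ge]
  have hbap0 : ∠ b a p ≠ 0 := by
    intro h
    have hz : ∡ b a p = 0 :=
      (EuclideanGeometry.oangle_eq_zero_iff_angle_eq_zero hab.symm hpa).mpr h
    have he : ∡ p a c = ∡ b a c := by rw [← key0, hz, zero_add]
    have he2 : ∠ p a c = ∠ b a c := by
      rw [EuclideanGeometry.angle_eq_abs_oangle_toReal hpa hac.symm,
        EuclideanGeometry.angle_eq_abs_oangle_toReal hab.symm hac.symm, he]
    rw [hα, EuclideanGeometry.angle_comm] at he2
    linarith [h1, he2.ge]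
  -- ∠ c a p = β and ∠ b a p = β
  have hcapβ : ∠ c a p = β := by
    rcases hval c a p (by simp) (by simp) (by simp) hac.symm hpa.symm (Ne.symm hpc)
        hcap0 (by intro h; linarith [h1, h.ge]) with h | h
    · exact absurd h1 (by rw [h]; exact lt_irrefl α)
    · exact h
  have hbapβ : ∠ b a p = β := by
    rcases hval b a p (by simp) (by simp) (by simp) hab.symm hpa.symm (Ne.symm hpb)
        hbap0 (by intro h; linarith [h2, h.ge]) with h | h
    · exact absurd h2 (by rw [h]; exact lt_irrefl α)
    · exact h
  -- orientations at a
  have hbac_o : ∡ b a c = (α : ℝ) := by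
    rw [EuclideanGeometry.oangle_eq_angle_of_sign_eq_one hsign, hα]
  have hbap_o : ∡ b a p = (β : ℝ) ∨ ∡ b a p = ((-β : ℝ) : Real.Angle) := by
    rcases EuclideanGeometry.oangle_eq_angle_or_eq_neg_angle hab.symm hpa with h | h
    · left; rw [h, hbapβ]
    · right; rw [h, hbapβ, Real.Angle.coe_neg]
  have hpac_o : ∡ p a c = (β : ℝ) ∨ ∡ p a c = ((-β : ℝ) : Real.Angle) := by
    have hpacβ : ∠ p a c = β := by rw [EuclideanGeometry.angle_comm]; exact hcapβ
    rcases EuclideanGeometry.oangle_eq_angle_or_eq_neg_angle hpa hac.symm with h | h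
    · left; rw [h, hpacβ]
    · right; rw [h, hpacβ, Real.Angle.coe_neg]
  -- case analysis: α = 2β and both oriented angles are +β
  have main1 : α = 2 * β ∧ ∡ b a p = (β : ℝ) ∧ ∡ p a c = (β : ℝ) := by
    rcases hbap_o with h₁ | h₁ <;> rcases hpac_o with h₂ | h₂
    · have heq : ((β + β : ℝ) : Real.Angle) = (α : ℝ) := by
        rw [Real.Angle.coe_add, ← hbac_o, ← key0, h₁, h₂]
      rcases coe_eq heq (by linarith) (by linarith) with h | h | h
      · exfalso; linarith
      · exact ⟨by linarith, h₁, h₂⟩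
      · exfalso; linarith
    · exfalso
      have heq : ((β + -β : ℝ) : Real.Angle) = (α : ℝ) := by
        rw [Real.Angle.coe_add, ← hbac_o, ← key0, h₁, h₂]
      rcases coe_eq heq (by linarith) (by linarith) with h | h | h <;> linarith
    · exfalso
      have heq : ((-β + β : ℝ) : Real.Angle) = (α : ℝ) := by
        rw [Real.Angle.coe_add, ← hbac_o, ← key0, h₁, h₂]
      rcases coe_eq heq (by linarith) (by linarith) with h | h | h <;> linarith
    · exfalso
      have heq : ((-β + -β : ℝ) : Real.Angle) = (α : ℝ) := by
        rw [Real.Angle.coe_add, ← hbac_o, ← key0, h₁, h₂]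
      rcases coe_eq heq (by linarith) (by linarith) with h | h | h <;> linarith
  obtain ⟨hα2β, hbap_o2, hpac_o2⟩ := main1
  have α2 : α = π / 2 := by linarith
  have β4 : β = π / 4 := by linarith
  rw [β4] at hbap_o2 hpac_o2
  -- noncollinearity of the triangles
  have nc_bap : ¬ Collinear ℝ ({b, a, p} : Set Pt) :=
    noncol hbap_o2 (by linarith) (by linarith) (by intro h; linarith)
  have nc_pac : ¬ Collinear ℝ ({p, a, c} : Set Pt) :=
    noncol hpac_o2 (by linarith) (by linarith) (by intro h; linarith)
  have nc_abp : ¬ Collinear ℝ ({a, b, p} : Set Pt) := by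
    intro hc; exact nc_bap (by rwa [Set.insert_comm] at hc)
  have nc_bpa : ¬ Collinear ℝ ({b, p, a} : Set Pt) := by
    intro hc
    exact nc_bap (by rwa [Set.pair_comm p a] at hc)
  have nc_acp : ¬ Collinear ℝ ({a, c, p} : Set Pt) := by
    intro hc
    exact nc_pac (by rwa [Set.pair_comm c p, Set.insert_comm a p] at hc)
  have nc_cpa : ¬ Collinear ℝ ({c, p, a} : Set Pt) := by
    intro hc
    exact nc_pac
      (by rwa [Set.pair_comm p a, Set.insert_comm c a, Set.pair_comm c p, Set.insert_comm a p]
        at hc)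
  have nc_bpc : ¬ Collinear ℝ ({b, p, c} : Set Pt) := by
    intro hc
    exact hside.right_notMem
      (hc.mem_affineSpan_of_mem_of_ne (by simp) (by simp) (by simp) hbc)
  -- oriented-angle options for the five remaining angles
  have opt : ∀ X Y Z : Pt, X ≠ Y → Z ≠ Y → (∠ X Y Z = α ∨ ∠ X Y Z = β) →
      ∃ t : ℝ, ∡ X Y Z = (t : ℝ) ∧
        (t = π/2 ∨ t = -(π/2) ∨ t = π/4 ∨ t = -(π/4)) := by
    intro X Y Z hX hZ h
    rcases EuclideanGeometry.oangle_eq_angle_or_eq_neg_angle hX hZ with ho | ho <;>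
      rcases h with h | h
    · exact ⟨π/2, by rw [ho, h, α2], Or.inl rfl⟩
    · exact ⟨π/4, by rw [ho, h, β4], Or.inr (Or.inr (Or.inl rfl))⟩
    · exact ⟨-(π/2), by rw [ho, h, α2]; exact (Real.Angle.coe_neg _).symm,
        Or.inr (Or.inl rfl)⟩
    · exact ⟨-(π/4), by rw [ho, h, β4]; exact (Real.Angle.coe_neg _).symm,
        Or.inr (Or.inr (Or.inr rfl))⟩
  have hoabp := opt a b p hab hpb
    (hval a b p (by simp) (by simp) (by simp) hab (Ne.symm hpb) hpa.symm
      (ne_of_gt (angle_pos_lt nc_abp).1) (ne_of_lt (angle_pos_lt nc_abp).2))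
  have hobpa := opt b p a (Ne.symm hpb) hpa.symm
    (hval b p a (by simp) (by simp) (by simp) (Ne.symm hpb) hpa hab.symm
      (ne_of_gt (angle_pos_lt nc_bpa).1) (ne_of_lt (angle_pos_lt nc_bpa).2))
  have hoacp := opt a c p hac hpc
    (hval a c p (by simp) (by simp) (by simp) hac (Ne.symm hpc) hpa.symm
      (ne_of_gt (angle_pos_lt nc_acp).1) (ne_of_lt (angle_pos_lt nc_acp).2))
  have hocpa := opt c p a (Ne.symm hpc) hpa.symm
    (hval c p a (by simp) (by simp) (by simp) (Ne.symm hpc) hpa hac.symm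
      (ne_of_gt (angle_pos_lt nc_cpa).1) (ne_of_lt (angle_pos_lt nc_cpa).2))
  have hobpc := opt b p c (Ne.symm hpb) (Ne.symm hpc)
    (hval b p c (by simp) (by simp) (by simp) (Ne.symm hpb) hpc hbc
      (ne_of_gt (angle_pos_lt nc_bpc).1) (ne_of_lt (angle_pos_lt nc_bpc).2))
  -- triangle a b p
  have tri1 : ∡ a b p + ∡ b p a = ((π + π/4 : ℝ) : Real.Angle) := by
    have t := EuclideanGeometry.oangle_add_oangle_add_oangle_eq_pi (p₁ := a) (p₂ := b) (p₃ := p)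
      hab.symm hpb hpa.symm
    have hrev : ∡ p a b = -∡ b a p := EuclideanGeometry.oangle_rev b a p
    rw [hrev, hbap_o2] at t
    have := eq_sub_of_add_eq t
    rw [this, sub_neg_eq_add, Real.Angle.coe_add]
  have hT1 : (∡ a b p = ((-(π/4) : ℝ) : Real.Angle) ∧ ∡ b p a = ((-(π/2) : ℝ) : Real.Angle)) ∨
      (∡ a b p = ((-(π/2) : ℝ) : Real.Angle) ∧ ∡ b p a = ((-(π/4) : ℝ) : Real.Angle)) := by
    obtain ⟨t₁, ht₁, hd₁⟩ := hoabp
    obtain ⟨t₂, ht₂, hd₂⟩ := hobpa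
    have hb₁ : -(π/2) ≤ t₁ ∧ t₁ ≤ π/2 := by
      rcases hd₁ with rfl | rfl | rfl | rfl <;> constructor <;> linarith
    have hb₂ : -(π/2) ≤ t₂ ∧ t₂ ≤ π/2 := by
      rcases hd₂ with rfl | rfl | rfl | rfl <;> constructor <;> linarith
    have heq : ((t₁ + t₂ : ℝ) : Real.Angle) = ((π + π/4 : ℝ) : Real.Angle) := by
      rw [Real.Angle.coe_add, ← ht₁, ← ht₂, tri1]
    rcases coe_eq heq (by linarith [hb₁.1, hb₂.1]) (by linarith [hb₁.2, hb₂.2]) with h | h | h <;>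
      rcases hd₁ with rfl | rfl | rfl | rfl <;> rcases hd₂ with rfl | rfl | rfl | rfl <;>
        first
          | (exfalso; linarith)
          | (left; exact ⟨ht₁, ht₂⟩)
          | (right; exact ⟨ht₁, ht₂⟩)
  -- triangle a c p
  have tri2 : ∡ a c p + ∡ c p a = ((π - π/4 : ℝ) : Real.Angle) := by
    have t := EuclideanGeometry.oangle_add_oangle_add_oangle_eq_pi (p₁ := a) (p₂ := c) (p₃ := p)
      hac.symm hpc hpa.symm
    rw [hpac_o2] at t
    have := eq_sub_of_add_eq t
    rw [this, Real.Angle.coe_sub]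
  have hT2 : (∡ a c p = ((π/2 : ℝ) : Real.Angle) ∧ ∡ c p a = ((π/4 : ℝ) : Real.Angle)) ∨
      (∡ a c p = ((π/4 : ℝ) : Real.Angle) ∧ ∡ c p a = ((π/2 : ℝ) : Real.Angle)) := by
    obtain ⟨t₁, ht₁, hd₁⟩ := hoacp
    obtain ⟨t₂, ht₂, hd₂⟩ := hocpa
    have hb₁ : -(π/2) ≤ t₁ ∧ t₁ ≤ π/2 := by
      rcases hd₁ with rfl | rfl | rfl | rfl <;> constructor <;> linarith
    have hb₂ : -(π/2) ≤ t₂ ∧ t₂ ≤ π/2 := by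
      rcases hd₂ with rfl | rfl | rfl | rfl <;> constructor <;> linarith
    have heq : ((t₁ + t₂ : ℝ) : Real.Angle) = ((π - π/4 : ℝ) : Real.Angle) := by
      rw [Real.Angle.coe_add, ← ht₁, ← ht₂, tri2]
    rcases coe_eq heq (by linarith [hb₁.1, hb₂.1]) (by linarith [hb₁.2, hb₂.2]) with h | h | h <;>
      rcases hd₁ with rfl | rfl | rfl | rfl <;> rcases hd₂ with rfl | rfl | rfl | rfl <;>
        first
          | (exfalso; linarith)
          | (left; exact ⟨ht₁, ht₂⟩)
          | (right; exact ⟨ht₁, ht₂⟩)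
  -- vertex p: rule out the wrong combination
  have vert : ∡ b p a + ∡ a p c = ∡ b p c :=
    EuclideanGeometry.oangle_add (Ne.symm hpb) hpa.symm (Ne.symm hpc)
  have main2 : ∀ u v : ℝ, ∡ b p a = (u : ℝ) → ∡ c p a = (v : ℝ) →
      (u = -(π/4) ∨ u = -(π/2)) → (v = π/4 ∨ v = π/2) → u = -(π/4) ∧ v = π/4 := by
    intro u v hu hv hdu hdv
    obtain ⟨t₅, ht₅, hd₅⟩ := hobpc
    have heq : ((u - v : ℝ) : Real.Angle) = ((t₅ : ℝ) : Real.Angle) := by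
      rw [Real.Angle.coe_sub, ← hu, ← hv, ← ht₅, ← vert]
      have hrev : ∡ a p c = -∡ c p a := EuclideanGeometry.oangle_rev c p a
      rw [hrev, sub_eq_add_neg]
    have hbu : -(π/2) ≤ u ∧ u ≤ π/2 := by
      rcases hdu with rfl | rfl <;> constructor <;> linarith
    have hbv : -(π/2) ≤ v ∧ v ≤ π/2 := by
      rcases hdv with rfl | rfl <;> constructor <;> linarith
    have hbt : -(π/2) ≤ t₅ ∧ t₅ ≤ π/2 := by
      rcases hd₅ with rfl | rfl | rfl | rfl <;> constructor <;> linarith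
    rcases coe_eq heq (by linarith [hbu.1, hbv.2, hbt.2]) (by linarith [hbu.2, hbv.1, hbt.1])
        with h | h | h <;>
      rcases hdu with rfl | rfl <;> rcases hdv with rfl | rfl <;>
        rcases hd₅ with rfl | rfl | rfl | rfl <;>
          first
            | (exfalso; linarith)
            | (exact ⟨rfl, rfl⟩)
  -- conclude exact oriented angles
  have final : ∡ a b p = ((-(π/2) : ℝ) : Real.Angle) ∧ ∡ b p a = ((-(π/4) : ℝ) : Real.Angle) ∧
      ∡ a c p = ((π/2 : ℝ) : Real.Angle) ∧ ∡ c p a = ((π/4 : ℝ) : Real.Angle) := by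
    rcases hT1 with ⟨e1, e2⟩ | ⟨e1, e2⟩ <;> rcases hT2 with ⟨f1, f2⟩ | ⟨f1, f2⟩
    · exfalso
      have := (main2 _ _ e2 f2 (Or.inr rfl) (Or.inl rfl)).1
      linarith
    · exfalso
      have := (main2 _ _ e2 f2 (Or.inr rfl) (Or.inr rfl)).1
      linarith
    · exact ⟨e1, e2, f1, f2⟩
    · exfalso
      have := (main2 _ _ e2 f2 (Or.inl rfl) (Or.inr rfl)).2
      linarith
  obtain ⟨eabp, ebpa, eacp, ecpa⟩ := final
  -- unoriented angles
  have habp : ∠ a b p = π/2 := by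
    have := angle_val hab hpb eabp (by linarith) (by linarith)
    rwa [abs_neg, abs_of_nonneg (by positivity)] at this
  have hbpa : ∠ b p a = π/4 := by
    have := angle_val (Ne.symm hpb) hpa.symm ebpa (by linarith) (by linarith)
    rwa [abs_neg, abs_of_nonneg (by positivity)] at this
  have hacp : ∠ a c p = π/2 := by
    have := angle_val hac hpc eacp (by linarith) (by linarith)
    rwa [abs_of_nonneg (by positivity)] at this
  have hcpa : ∠ c p a = π/4 := by
    have := angle_val (Ne.symm hpc) hpa.symm ecpa (by linarith) (by linarith)
    rwa [abs_of_nonneg (by positivity)] at this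
  -- distances
  have dba : dist b a = dist b p :=
    EuclideanGeometry.dist_eq_of_angle_eq_angle_of_angle_ne_pi
      (by rw [hbapβ, β4, hbpa]) (by rw [habp]; intro h; linarith)
  have dca : dist c a = dist c p :=
    EuclideanGeometry.dist_eq_of_angle_eq_angle_of_angle_ne_pi
      (by rw [hcapβ, β4, hcpa]) (by rw [hacp]; intro h; linarith)
  have dap : dist a p = dist c b := by
    have l1 := EuclideanGeometry.law_cos a b p
    have l2 := EuclideanGeometry.law_cos c a b
    rw [habp, Real.cos_pi_div_two] at l1
    have hcab : ∠ c a b = π/2 := by rw [EuclideanGeometry.angle_comm, hα, α2]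
    rw [hcab, Real.cos_pi_div_two] at l2
    have e₁ : dist p b = dist a b := by rw [dist_comm p b, ← dba, dist_comm b a]
    have e₂ : dist c a = dist a b := by rw [dist_comm c a, hiso]
    have e₃ : dist b a = dist a b := dist_comm b a
    rw [e₁] at l1
    rw [e₂, e₃] at l2
    exact (mul_self_inj dist_nonneg dist_nonneg).mp (by linarith)
  exact ⟨α2, β4, dba, dca, dap⟩

end Stmt16Aux

set_option maxHeartbeats 1000000 in
theorem stmt16 (a b c p : Pt) (α β : ℝ)
    (hcol : ¬ Collinear ℝ ({a, b, c} : Set Pt))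
    (hiso : dist a b = dist a c)
    (hα : ∠ b a c = α) (hβ : ∠ a b c = β) (hne : α ≠ β)
    (hside : (affineSpan ℝ ({b, c} : Set Pt)).SOppSide a p)
    (h1 : ∠ c a p < α) (h2 : ∠ b a p < α)
    (hcount : (angleSet {a, b, c, p}).ncard ≤ 2) :
    α = Real.pi / 2 ∧ β = Real.pi / 4 ∧
    dist a c = dist c p ∧ dist c p = dist p b ∧ dist p b = dist b a ∧
    dist a p = dist c b := by
  have hns : (∡ b a c).sign ≠ 0 := by
    intro h
    have hcc := EuclideanGeometry.oangle_sign_eq_zero_iff_collinear.mp h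
    exact hcol (by rwa [Set.insert_comm] at hcc)
  have key : α = Real.pi / 2 ∧ β = Real.pi / 4 ∧
      dist b a = dist b p ∧ dist c a = dist c p ∧ dist a p = dist c b := by
    cases hs : (∡ b a c).sign with
    | zero => exact absurd hs hns
    | pos =>
      exact Stmt16Aux.aux a b c p α β hcol hiso hα hβ hne hside h1 h2 hcount (by rw [hs]; rfl)
    | neg =>
      have hcol' : ¬ Collinear ℝ ({a, c, b} : Set Pt) := by
        rwa [Set.pair_comm c b]
      have hβ' : ∠ a c b = β := by
        rw [← EuclideanGeometry.angle_eq_angle_of_dist_eq hiso]; exact hβ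
      have hα' : ∠ c a b = α := by rw [EuclideanGeometry.angle_comm]; exact hα
      have hside' : (affineSpan ℝ ({c, b} : Set Pt)).SOppSide a p := by
        rwa [Set.pair_comm c b]
      have hcount' : (angleSet {a, c, b, p}).ncard ≤ 2 := by
        rwa [Set.insert_comm c b]
      have hsign' : (∡ c a b).sign = 1 := by
        rw [← EuclideanGeometry.oangle_swap₁₃_sign, hs]
        decide
      obtain ⟨k1, k2, q1, q2, q3⟩ :=
        Stmt16Aux.aux a c b p α β hcol' hiso.symm hα' hβ' hne hside' h2 h1 hcount' hsign'
      exact ⟨k1, k2, q2, q1, by rw [dist_comm c b]; exact q3⟩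
  obtain ⟨k1, k2, q1, q2, q3⟩ := key
  refine ⟨k1, k2, ?_, ?_, ?_, q3⟩
  · rw [dist_comm a c]; exact q2
  · rw [← q2, dist_comm c a, ← hiso, dist_comm a b, q1, dist_comm b p]
  · rw [dist_comm p b, ← q1]
end
end

section
/- Any four points in ℝ², not all collinear, determine at least two distinct angle values in (0,π); equivalently P(1) = 3. -/
open EuclideanGeometry

noncomputable section

lemma angleSet_finite (P : Set Pt) (hP : P.Finite) : (angleSet P).Finite := by
  apply Set.Finite.subset ((hP.prod (hP.prod hP)).image
    (fun t : Pt × Pt × Pt => ∠ t.1 t.2.1 t.2.2))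
  rintro θ ⟨_, x, hx, y, hy, z, hz, _, _, _, rfl⟩
  exact ⟨(x, y, z), ⟨hx, hy, hz⟩, rfl⟩

lemma tri_perm (x y z : Pt) : ({y, z, x} : Set Pt) = {x, y, z} := by
  ext p; simp; tauto

lemma nes_of_not_collinear {x y z : Pt} (h : ¬Collinear ℝ ({x, y, z} : Set Pt)) :
    x ≠ y ∧ y ≠ z ∧ x ≠ z := by
  refine ⟨?_, ?_, ?_⟩ <;> rintro rfl <;> apply h
  · simpa using collinear_pair ℝ x z
  · simpa [Set.insert_comm] using collinear_pair ℝ x y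
  · simpa [Set.insert_comm] using collinear_pair ℝ y x

lemma mem_angleSet {S : Set Pt} {x y z : Pt} (hx : x ∈ S) (hy : y ∈ S) (hz : z ∈ S)
    (h : ¬Collinear ℝ ({x, y, z} : Set Pt)) : ∠ x y z ∈ angleSet S := by
  obtain ⟨hxy, hyz, hxz⟩ := nes_of_not_collinear h
  exact ⟨⟨angle_pos_of_not_collinear h, angle_lt_pi_of_not_collinear h⟩,
    x, hx, y, hy, z, hz, hxy, hyz, hxz, rfl⟩

lemma two_le_ncard {S : Set Pt} (hS : S.Finite) {θ₁ θ₂ : ℝ}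
    (h1 : θ₁ ∈ angleSet S) (h2 : θ₂ ∈ angleSet S) (hne : θ₁ ≠ θ₂) :
    2 ≤ (angleSet S).ncard := by
  have hsub : ({θ₁, θ₂} : Set ℝ) ⊆ angleSet S := by rintro t (rfl | rfl) <;> assumption
  calc 2 = ({θ₁, θ₂} : Set ℝ).ncard := (Set.ncard_pair hne).symm
    _ ≤ _ := Set.ncard_le_ncard hsub (angleSet_finite S hS)

lemma key_tri {S : Set Pt} (hS : S.Finite) {x y z : Pt} (hx : x ∈ S) (hy : y ∈ S) (hz : z ∈ S)
    (h : ¬Collinear ℝ ({x, y, z} : Set Pt)) (hne : ∠ x y z ≠ Real.pi / 3) :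
    2 ≤ (angleSet S).ncard := by
  obtain ⟨hxy, hyz, hxz⟩ := nes_of_not_collinear h
  have hsum : ∠ x y z + ∠ y z x + ∠ z x y = Real.pi :=
    angle_add_angle_add_angle_eq_pi z (Ne.symm hxy)
  have h2 : ¬Collinear ℝ ({y, z, x} : Set Pt) := by rwa [tri_perm]
  have h3 : ¬Collinear ℝ ({z, x, y} : Set Pt) := by
    rwa [show ({z, x, y} : Set Pt) = {x, y, z} from by ext t; simp; tauto]
  by_cases h12 : ∠ x y z = ∠ y z x
  · have h13 : ∠ x y z ≠ ∠ z x y := by intro hh; apply hne; linarith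
    exact two_le_ncard hS (mem_angleSet hx hy hz h) (mem_angleSet hz hx hy h3) h13
  · exact two_le_ncard hS (mem_angleSet hx hy hz h) (mem_angleSet hy hz hx h2) h12

lemma offLine {p q r c : Pt} (hncl : ¬Collinear ℝ ({p, q, c} : Set Pt))
    (hcol : Collinear ℝ ({p, q, r} : Set Pt)) {m x : Pt}
    (hm : m ∈ ({p, q, r} : Set Pt)) (hx : x ∈ ({p, q, r} : Set Pt)) (hmx : m ≠ x) :
    ¬Collinear ℝ ({c, m, x} : Set Pt) := by
  intro h
  have hc' : c ∈ line[ℝ, m, x] :=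
    h.mem_affineSpan_of_mem_of_ne (by simp) (by simp) (by simp) hmx
  have hp' : p ∈ line[ℝ, m, x] := hcol.mem_affineSpan_of_mem_of_ne hm hx (by simp) hmx
  have hq' : q ∈ line[ℝ, m, x] :=
    hcol.mem_affineSpan_of_mem_of_ne hm hx (by simp) hmx
  have hbig : Collinear ℝ ({c, p, q, m, x} : Set Pt) :=
    collinear_insert_insert_insert_of_mem_affineSpan_pair hc' hp' hq'
  exact hncl (hbig.subset (by intro t ht; simp at ht ⊢; tauto))

lemma sbtwCase {S : Set Pt} (hS : S.Finite) {x m y c : Pt}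
    (hx : x ∈ S) (hm : m ∈ S) (hy : y ∈ S) (hc : c ∈ S)
    (hsb : Sbtw ℝ x m y)
    (ncl1 : ¬Collinear ℝ ({c, m, x} : Set Pt)) (ncl2 : ¬Collinear ℝ ({c, m, y} : Set Pt)) :
    2 ≤ (angleSet S).ncard := by
  have hpi : ∠ x m y = Real.pi := angle_eq_pi_iff_sbtw.2 hsb
  have hsum : ∠ c m x + ∠ c m y = Real.pi := angle_add_angle_eq_pi_of_angle_eq_pi c hpi
  by_cases heq : ∠ c m x = ∠ c m y
  · refine key_tri hS hc hm hx ncl1 ?_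
    intro h3
    rw [h3] at heq hsum
    rw [← heq] at hsum
    have := Real.pi_pos
    linarith
  · exact two_le_ncard hS (mem_angleSet hc hm hx ncl1) (mem_angleSet hc hm hy ncl2) heq

lemma lineCase {S : Set Pt} (hS : S.Finite) {p q r c : Pt}
    (hp : p ∈ S) (hq : q ∈ S) (hr : r ∈ S) (hc : c ∈ S)
    (hcol : Collinear ℝ ({p, q, r} : Set Pt))
    (hpq : p ≠ q) (hqr : q ≠ r) (hpr : p ≠ r)
    (hncl : ¬Collinear ℝ ({p, q, c} : Set Pt)) :
    2 ≤ (angleSet S).ncard := by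
  rcases hcol.wbtw_or_wbtw_or_wbtw with hw | hw | hw
  · exact sbtwCase hS hp hq hr hc ⟨hw, hpq.symm, hqr⟩
      (offLine hncl hcol (by simp) (by simp) hpq.symm)
      (offLine hncl hcol (by simp) (by simp) hqr)
  · exact sbtwCase hS hq hr hp hc ⟨hw, hqr.symm, hpr.symm⟩
      (offLine hncl hcol (by simp) (by simp) hqr.symm)
      (offLine hncl hcol (by simp) (by simp) hpr.symm)
  · exact sbtwCase hS hr hp hq hc ⟨hw, hpr, hpq⟩
      (offLine hncl hcol (by simp) (by simp) hpr)
      (offLine hncl hcol (by simp) (by simp) hpq)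

lemma algebra_core (u1 u2 v1 v2 w1 w2 s : ℝ) (hs : 0 < s)
    (e0 : u1^2 + u2^2 = s) (e1 : v1^2 + v2^2 = s) (e2 : w1^2 + w2^2 = s)
    (e3 : (v1-u1)^2 + (v2-u2)^2 = s) (e4 : (w1-u1)^2 + (w2-u2)^2 = s)
    (e5 : (w1-v1)^2 + (w2-v2)^2 = s) : False := by
  have duv : u1*v1 + u2*v2 = s/2 := by nlinarith [e0, e1, e3]
  have duw : u1*w1 + u2*w2 = s/2 := by nlinarith [e0, e2, e4]
  have dvw : v1*w1 + v2*w2 = s/2 := by nlinarith [e1, e2, e5]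
  set X := u1*v2 - u2*v1 with hX
  set Y := v1*w2 - v2*w1 with hY
  set Z := w1*u2 - w2*u1 with hZ
  have hu : X*(s/2) + Y*s + Z*(s/2) = 0 := by
    linear_combination (-X)*duw + (-Y)*e0 + (-Z)*duv
  have hv : X*(s/2) + Y*(s/2) + Z*s = 0 := by
    linear_combination (-X)*dvw + (-Y)*duv + (-Z)*e1
  have hw : X*s + Y*(s/2) + Z*(s/2) = 0 := by
    linear_combination (-X)*e2 + (-Y)*duw + (-Z)*dvw
  have hXY : (X - Y) * s = 0 := by linear_combination 2*hw - 2*hu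
  have hYZ : (Y - Z) * s = 0 := by linear_combination 2*hu - 2*hv
  have h1 : X = Y := by
    rcases mul_eq_zero.1 hXY with h | h
    · linarith
    · exact absurd h hs.ne'
  have h2 : Y = Z := by
    rcases mul_eq_zero.1 hYZ with h | h
    · linarith
    · exact absurd h hs.ne'
  have hsumXYZ : (X + Y + Z) * s = 0 := by linear_combination (hu + hv + hw)/2
  have h3 : X * s = 0 := by linear_combination hsumXYZ/3 + (2*s/3)*h1 + (s/3)*h2
  have hX0 : X = 0 := by
    rcases mul_eq_zero.1 h3 with h | h
    · exact h
    · exact absurd h hs.ne'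
  have hfin : X^2 = s*s - (s/2)*(s/2) := by
    linear_combination (v1^2+v2^2)*e0 + s*e1 - (u1*v1+u2*v2+s/2)*duv
  rw [hX0] at hfin
  nlinarith [hs]

lemma dist_sq_coord (x y : Pt) : dist x y ^ 2 = (x 0 - y 0) ^ 2 + (x 1 - y 1) ^ 2 := by
  rw [EuclideanSpace.dist_eq, Real.sq_sqrt (by positivity)]
  simp [Fin.sum_univ_two, Real.dist_eq, sq_abs]

lemma no_four_equidistant (a b c d : Pt) (hab : a ≠ b)
    (h1 : dist a c = dist a b) (h2 : dist a d = dist a b) (h3 : dist b c = dist a b)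
    (h4 : dist b d = dist a b) (h5 : dist c d = dist a b) : False := by
  have hs : 0 < dist a b ^ 2 := by
    have := dist_pos.2 hab
    positivity
  have q1 := dist_sq_coord a b
  have q2 := dist_sq_coord a c
  have q3 := dist_sq_coord a d
  have q4 := dist_sq_coord b c
  have q5 := dist_sq_coord b d
  have q6 := dist_sq_coord c d
  rw [h1] at q2; rw [h2] at q3; rw [h3] at q4; rw [h4] at q5; rw [h5] at q6
  exact algebra_core (b 0 - a 0) (b 1 - a 1) (c 0 - a 0) (c 1 - a 1) (d 0 - a 0) (d 1 - a 1)
    (dist a b ^ 2) hs (by linarith) (by linarith) (by linarith)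
    (by linarith) (by linarith) (by linarith)

lemma pi_third_ne_pi : Real.pi / 3 ≠ Real.pi := by
  have := Real.pi_pos; intro h; linarith

lemma equilateral_of_ang {S : Set Pt}
    (ang : ∀ x y z : Pt, x ∈ S → y ∈ S → z ∈ S → ¬Collinear ℝ ({x, y, z} : Set Pt) →
      ∠ x y z = Real.pi / 3)
    {x y z : Pt} (hx : x ∈ S) (hy : y ∈ S) (hz : z ∈ S)
    (h : ¬Collinear ℝ ({x, y, z} : Set Pt)) :
    dist x y = dist x z ∧ dist x y = dist y z := by
  have hp1 : ¬Collinear ℝ ({x, z, y} : Set Pt) := by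
    rwa [show ({x, z, y} : Set Pt) = {x, y, z} from by ext t; simp; tauto]
  have hp2 : ¬Collinear ℝ ({y, x, z} : Set Pt) := by
    rwa [show ({y, x, z} : Set Pt) = {x, y, z} from by ext t; simp; tauto]
  have a1 : ∠ x y z = Real.pi / 3 := ang x y z hx hy hz h
  have a2 : ∠ x z y = Real.pi / 3 := ang x z y hx hz hy hp1
  have a3 : ∠ y x z = Real.pi / 3 := ang y x z hy hx hz hp2
  have d1 : dist x y = dist x z :=
    dist_eq_of_angle_eq_angle_of_angle_ne_pi (a1.trans a2.symm) (a3.trans_ne pi_third_ne_pi)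
  have d2 : dist y x = dist y z := by
    refine dist_eq_of_angle_eq_angle_of_angle_ne_pi ?_ (a1.trans_ne pi_third_ne_pi)
    rw [a3, angle_comm, a2]
  exact ⟨d1, (dist_comm x y).trans d2⟩

lemma main_core (a b c d : Pt)
    (hab : a ≠ b) (hac : a ≠ c) (had : a ≠ d) (hbc : b ≠ c) (hbd : b ≠ d) (hcd : c ≠ d)
    (habc : ¬Collinear ℝ ({a, b, c} : Set Pt)) :
    2 ≤ (angleSet {a, b, c, d}).ncard := by
  set S : Set Pt := {a, b, c, d} with hSdef
  have hS : S.Finite := Set.toFinite _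
  have ha : a ∈ S := by simp [hSdef]
  have hb : b ∈ S := by simp [hSdef]
  have hc : c ∈ S := by simp [hSdef]
  have hd : d ∈ S := by simp [hSdef]
  by_contra hlt
  have ang : ∀ x y z : Pt, x ∈ S → y ∈ S → z ∈ S → ¬Collinear ℝ ({x, y, z} : Set Pt) →
      ∠ x y z = Real.pi / 3 := by
    intro x y z hx hy hz hncl
    by_contra hne
    exact hlt (key_tri hS hx hy hz hncl hne)
  by_cases h1 : Collinear ℝ ({a, b, d} : Set Pt)
  · exact hlt (lineCase hS ha hb hd hc h1 hab hbd had habc)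
  by_cases h2 : Collinear ℝ ({a, c, d} : Set Pt)
  · refine hlt (lineCase hS ha hc hd hb h2 hac hcd had ?_)
    rwa [show ({a, c, b} : Set Pt) = {a, b, c} from by ext t; simp; tauto]
  -- all of abc, abd, acd noncollinear: equilateral everywhere
  obtain ⟨dab_ac, dab_bc⟩ := equilateral_of_ang ang ha hb hc habc
  obtain ⟨dab_ad, dab_bd⟩ := equilateral_of_ang ang ha hb hd h1
  obtain ⟨dac_ad, dac_cd⟩ := equilateral_of_ang ang ha hc hd h2
  exact no_four_equidistant a b c d hab dab_ac.symm dab_ad.symm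
    dab_bc.symm dab_bd.symm (dac_cd.symm.trans dab_ac.symm)

theorem stmt17 (a b c d : Pt)
    (hab : a ≠ b) (hac : a ≠ c) (had : a ≠ d) (hbc : b ≠ c) (hbd : b ≠ d) (hcd : c ≠ d)
    (hcol : ¬ Collinear ℝ ({a, b, c, d} : Set Pt)) :
    2 ≤ (angleSet {a, b, c, d}).ncard := by
  by_cases h1 : Collinear ℝ ({a, b, c} : Set Pt)
  · by_cases h2 : Collinear ℝ ({a, b, d} : Set Pt)
    · exfalso
      have hc' : c ∈ line[ℝ, a, b] :=
        h1.mem_affineSpan_of_mem_of_ne (by simp) (by simp) (by simp) hab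
      have hd' : d ∈ line[ℝ, a, b] :=
        h2.mem_affineSpan_of_mem_of_ne (by simp) (by simp) (by simp) hab
      have hbig : Collinear ℝ ({c, d, a, b} : Set Pt) :=
        collinear_insert_insert_of_mem_affineSpan_pair hc' hd'
      exact hcol (hbig.subset (by intro t ht; simp at ht ⊢; tauto))
    · have := main_core a b d c hab had hac hbd hbc hcd.symm h2
      rwa [show ({a, b, d, c} : Set Pt) = {a, b, c, d} from by ext t; simp; tauto] at this
  · exact main_core a b c d hab hac had hbc hbd hcd h1
end
end

section
/- Let ABCD be a convex quadrilateral (vertices in cyclic order) whose four vertices determine at most three distinct angle values in (0,π). If some interior angle of the quadrilateral, say at vertex B, is acute with value β, then each of the two angles into which diagonal BD splits β equals β/2. -/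
open EuclideanGeometry

noncomputable section

/-- A convex quadrilateral with vertices in cyclic order: the open diagonals meet and
no three consecutive vertices are collinear. -/
def ConvexQuad (A B C D : Pt) : Prop :=
  (∃ x, x ∈ openSegment ℝ A C ∧ x ∈ openSegment ℝ B D) ∧
  ¬ Collinear ℝ ({A, B, C} : Set Pt) ∧ ¬ Collinear ℝ ({B, C, D} : Set Pt) ∧
  ¬ Collinear ℝ ({C, D, A} : Set Pt) ∧ ¬ Collinear ℝ ({D, A, B} : Set Pt)

/-- Angle is unchanged when the endpoint moves along the open segment from the vertex. -/
lemma angle_ray {B D X : Pt} (P : Pt) (h : X ∈ openSegment ℝ B D) :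
    ∠ P B X = ∠ P B D := by
  obtain ⟨a, b, ha, hb, hab, hX⟩ := h
  have hXB : X -ᵥ B = b • (D -ᵥ B) := by
    have ha' : a = 1 - b := by linarith
    simp only [vsub_eq_sub, ← hX, ha']
    module
  show InnerProductGeometry.angle (P -ᵥ B) (X -ᵥ B) = InnerProductGeometry.angle (P -ᵥ B) (D -ᵥ B)
  rw [hXB, InnerProductGeometry.angle_smul_right_of_pos _ _ hb]

/-- The diagonal through the interior point X splits the angle at B. -/
lemma angle_split {A B C D X : Pt} (hX1 : X ∈ openSegment ℝ A C)
    (hX2 : X ∈ openSegment ℝ B D) (hABC : ¬ Collinear ℝ ({A, B, C} : Set Pt)) :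
    ∠ A B D + ∠ D B C = ∠ A B C := by
  have hAC : A ≠ C := by
    rintro rfl
    exact hABC (Collinear.subset (by intro x; simp only [Set.mem_insert_iff, Set.mem_singleton_iff]; tauto) (collinear_pair ℝ A B))
  have hXA : X ≠ A := by
    rintro rfl
    exact hAC (left_mem_openSegment_iff.1 hX1)
  have hXC : X ≠ C := by
    rintro rfl
    exact hAC (right_mem_openSegment_iff.1 hX1)
  have hSb : Sbtw ℝ A X C :=
    ⟨mem_segment_iff_wbtw.1 (openSegment_subset_segment _ _ _ hX1), hXA, hXC⟩
  have hXB : X ≠ B := by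
    rintro rfl
    exact hABC (Collinear.subset (by intro x; simp only [Set.mem_insert_iff, Set.mem_singleton_iff]; tauto) hSb.wbtw.collinear)
  have hBA : B ≠ A := by
    rintro rfl
    exact hABC (Collinear.subset (by intro x; simp only [Set.mem_insert_iff, Set.mem_singleton_iff]; tauto) (collinear_pair ℝ B C))
  have hCA : C ≠ A := hAC.symm
  have hsum : ∠ B X A + ∠ B X C = Real.pi :=
    angle_add_angle_eq_pi_of_angle_eq_pi B hSb.angle₁₂₃_eq_pi
  have t1 : ∠ A B X + ∠ B X A + ∠ X A B = Real.pi :=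
    angle_add_angle_add_angle_eq_pi X hBA
  have t2 : ∠ X B C + ∠ B C X + ∠ C X B = Real.pi :=
    angle_add_angle_add_angle_eq_pi C hXB.symm
  have t3 : ∠ A B C + ∠ B C A + ∠ C A B = Real.pi :=
    angle_add_angle_add_angle_eq_pi C hBA
  have r1 : ∠ A B X = ∠ A B D := angle_ray A hX2
  have r2 : ∠ C B X = ∠ C B D := angle_ray C hX2
  have r3 : ∠ B A X = ∠ B A C := angle_ray B hX1
  have r4 : ∠ B C X = ∠ B C A := angle_ray B (by rwa [openSegment_symm] at hX1)
  have c1 : ∠ X B C = ∠ C B X := angle_comm _ _ _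
  have c2 : ∠ C B D = ∠ D B C := angle_comm _ _ _
  have c3 : ∠ X A B = ∠ B A X := angle_comm _ _ _
  have c4 : ∠ C A B = ∠ B A C := angle_comm _ _ _
  have c5 : ∠ C X B = ∠ B X C := angle_comm _ _ _
  linarith

theorem stmt19 (A B C D : Pt) (β : ℝ) (hq : ConvexQuad A B C D)
    (hcount : (angleSet {A, B, C, D}).ncard ≤ 3)
    (hB : ∠ A B C = β) (hacute : β < Real.pi / 2) :
    ∠ A B D = β / 2 ∧ ∠ D B C = β / 2 := by
  obtain ⟨⟨X, hX1, hX2⟩, hABC, hBCD, hCDA, hDAB⟩ := hq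
  -- distinctness of vertices
  have neOf : ∀ {P Q R : Pt}, ¬ Collinear ℝ ({P, Q, R} : Set Pt) →
      P ≠ Q ∧ Q ≠ R ∧ P ≠ R := by
    intro P Q R h
    refine ⟨?_, ?_, ?_⟩ <;> rintro rfl
    · exact h (Collinear.subset (by intro x; simp only [Set.mem_insert_iff, Set.mem_singleton_iff]; tauto) (collinear_pair ℝ P R))
    · exact h (Collinear.subset (by intro x; simp only [Set.mem_insert_iff, Set.mem_singleton_iff]; tauto) (collinear_pair ℝ P Q))
    · exact h (Collinear.subset (by intro x; simp only [Set.mem_insert_iff, Set.mem_singleton_iff]; tauto) (collinear_pair ℝ P Q))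
  obtain ⟨hAB, hBC, hAC⟩ := neOf hABC
  obtain ⟨hCD, hDA, hCA'⟩ := neOf hCDA
  obtain ⟨hDA', hAB', hDB⟩ := neOf hDAB
  -- B ≠ D
  have hBD : B ≠ D := hDB.symm
  -- splits at B and at D
  have s1 : ∠ A B D + ∠ D B C = ∠ A B C := angle_split hX1 hX2 hABC
  have s2 : ∠ C D B + ∠ B D A = ∠ C D A := by
    refine angle_split (A := C) (B := D) (C := A) (D := B) (X := X) ?_ ?_ hCDA
    · rwa [openSegment_symm] at hX1
    · rwa [openSegment_symm] at hX2
  -- triangle sums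
  have t1 : ∠ A B D + ∠ B D A + ∠ D A B = Real.pi :=
    angle_add_angle_add_angle_eq_pi D hAB.symm
  have t2 : ∠ C D B + ∠ D B C + ∠ B C D = Real.pi :=
    angle_add_angle_add_angle_eq_pi B hCD.symm
  have hπ : 0 < Real.pi := Real.pi_pos
  -- interior angles in (0, π)
  have hDAB01 := angle_pos_of_not_collinear hDAB
  have hDAB02 := angle_lt_pi_of_not_collinear hDAB
  have hBCD01 := angle_pos_of_not_collinear hBCD
  have hBCD02 := angle_lt_pi_of_not_collinear hBCD
  have hCDA01 := angle_pos_of_not_collinear hCDA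
  have hCDA02 := angle_lt_pi_of_not_collinear hCDA
  have hβpos : 0 < β := hB ▸ angle_pos_of_not_collinear hABC
  -- parts of the split angle are positive
  have hABD0 : 0 < ∠ A B D := by
    have : ¬ Collinear ℝ ({A, B, D} : Set Pt) :=
      fun h => hDAB (Collinear.subset (by intro x; simp only [Set.mem_insert_iff, Set.mem_singleton_iff]; tauto) h)
    exact angle_pos_of_not_collinear this
  have hDBC0 : 0 < ∠ D B C := by
    have : ¬ Collinear ℝ ({D, B, C} : Set Pt) :=
      fun h => hBCD (Collinear.subset (by intro x; simp only [Set.mem_insert_iff, Set.mem_singleton_iff]; tauto) h)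
    exact angle_pos_of_not_collinear this
  -- an obtuse angle exists among the other three interior angles
  have key : Real.pi / 2 < ∠ D A B ∨ Real.pi / 2 < ∠ B C D ∨ Real.pi / 2 < ∠ C D A := by
    by_contra h
    push_neg at h
    obtain ⟨k1, k2, k3⟩ := h
    linarith [s1, s2, t1, t2, hB]
  -- set up the obtuse angle value with witnesses
  obtain ⟨θ, x, y, z, hx, hy, hz, hxy, hyz, hxz, hθval, hθlo, hθhi⟩ :
      ∃ θ x y z, x ∈ ({A, B, C, D} : Set Pt) ∧ y ∈ ({A, B, C, D} : Set Pt) ∧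
        z ∈ ({A, B, C, D} : Set Pt) ∧ x ≠ y ∧ y ≠ z ∧ x ≠ z ∧ ∠ x y z = θ ∧
        Real.pi / 2 < θ ∧ θ < Real.pi := by
    rcases key with h | h | h
    · exact ⟨∠ D A B, D, A, B, by simp, by simp, by simp, hDA'.symm.symm, hAB, hDB,
        rfl, h, hDAB02⟩
    · exact ⟨∠ B C D, B, C, D, by simp, by simp, by simp, hBC, hCD, hBD,
        rfl, h, hBCD02⟩
    · exact ⟨∠ C D A, C, D, A, by simp, by simp, by simp, hCD, hDA, hCA',
        rfl, h, hCDA02⟩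
  set a := ∠ A B D with ha
  set b := ∠ D B C with hb
  have hab_sum : a + b = β := by rw [ha, hb]; rw [s1, hB]
  have haβ : a < β := by linarith
  have hbβ : b < β := by linarith
  -- finiteness of the angle set
  have hfin : (angleSet {A, B, C, D}).Finite := by
    have hS : ({A, B, C, D} : Set Pt).Finite := Set.toFinite _
    apply Set.Finite.subset (((hS.prod (hS.prod hS)).image
      (fun t : Pt × Pt × Pt => ∠ t.1 t.2.1 t.2.2)))
    rintro θ' ⟨_, x, hx, y, hy, z, hz, _, _, _, hval⟩
    exact ⟨(x, y, z), ⟨hx, hy, hz⟩, hval⟩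
  have hAD : A ≠ D := hDA'.symm
  have haMem : a ∈ angleSet {A, B, C, D} :=
    ⟨⟨hABD0, by linarith⟩, A, by simp, B, by simp, D, by simp, hAB, hBD, hAD, rfl⟩
  have hbMem : b ∈ angleSet {A, B, C, D} :=
    ⟨⟨hDBC0, by linarith⟩, D, by simp, B, by simp, C, by simp, hDB, hBC, hCD.symm, rfl⟩
  have hβMem : β ∈ angleSet {A, B, C, D} :=
    ⟨⟨hβpos, by linarith⟩, A, by simp, B, by simp, C, by simp, hAB, hBC, hAC, hB⟩
  have hθMem : θ ∈ angleSet {A, B, C, D} :=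
    ⟨⟨by linarith, hθhi⟩, x, hx, y, hy, z, hz, hxy, hyz, hxz, hθval⟩
  -- the two split parts must be equal
  have hab : a = b := by
    by_contra hab
    have hsub : ({a, b, β, θ} : Set ℝ) ⊆ angleSet {A, B, C, D} := by
      rintro t (rfl | rfl | rfl | rfl)
      exacts [haMem, hbMem, hβMem, hθMem]
    have h4 : ({a, b, β, θ} : Set ℝ).ncard = 4 := by
      rw [Set.ncard_insert_of_notMem (by
        simp only [Set.mem_insert_iff, Set.mem_singleton_iff]
        push_neg
        exact ⟨hab, by linarith, by linarith⟩),
        Set.ncard_insert_of_notMem (by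
        simp only [Set.mem_insert_iff, Set.mem_singleton_iff]
        push_neg
        exact ⟨by linarith, by linarith⟩),
        Set.ncard_insert_of_notMem (by
        simp only [Set.mem_singleton_iff]
        exact by linarith),
        Set.ncard_singleton]
    have := Set.ncard_le_ncard hsub hfin
    omega
  constructor <;> [skip; skip] <;> linarith

end
end
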